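/- For m, n ≥ 3 with (m,n) ≠ (3,3), let L_m be the language of the DFA over {a,b} with states {0,…,m−1}, initial state 0, final state m−1, a: cycle (1,…,m−1), b: transposition (0,1); and let K_n be the language of the DFA obtained by swapping the roles of a and b (b: cycle (1,…,n−1), a: transposition (0,1)). Then for every binary boolean operation ∘ that depends on both arguments, the state complexity of L_m ∘ K_n is exactly mn. -/

import Mathlib

namespace BoolOpSC
open Equiv Equiv.Perm

/-- transposition (0 1) -/
def tr (m : ℕ) (hm : 3 ≤ m) : Perm (Fin m) :=
  Equiv.swap ⟨0, by omega⟩ ⟨1, by omega⟩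

/-- cycle (1 2 ... m-1) fixing 0 -/
def cyc (m : ℕ) (hm : 3 ≤ m) : Perm (Fin m) :=
  tr m hm * finRotate m

variable {m n : ℕ}

lemma tr_apply_val (hm : 3 ≤ m) (q : Fin m) :
    ((tr m hm) q).val = if q.val = 0 then 1 else if q.val = 1 then 0 else q.val := by
  rw [tr, Equiv.swap_apply_def]
  have h := q.isLt
  split_ifs with h1 h2 <;> simp_all [Fin.ext_iff]

lemma finRotate_val (hm : 3 ≤ m) (q : Fin m) :
    (finRotate m q).val = if q.val = m - 1 then 0 else q.val + 1 := by
  obtain ⟨k, rfl⟩ : ∃ k, m = k + 1 := ⟨m - 1, by omega⟩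
  rw [finRotate_succ_apply, Fin.val_add_one]
  have h := q.isLt
  have hlast : (q = Fin.last k) ↔ q.val = k + 1 - 1 := by
    rw [Fin.ext_iff, Fin.val_last]; omega
  by_cases hq : q = Fin.last k
  · rw [if_pos hq, if_pos (hlast.mp hq)]
  · rw [if_neg hq, if_neg (fun hh => hq (hlast.mpr hh))]

lemma cyc_apply_val (hm : 3 ≤ m) (q : Fin m) :
    ((cyc m hm) q).val = if q.val = 0 then 0 else if q.val = m - 1 then 1 else q.val + 1 := by
  rw [cyc, Equiv.Perm.mul_apply, tr_apply_val hm, finRotate_val hm]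
  have h := q.isLt
  split_ifs <;> try omega
  all_goals exact False.elim (by assumption)

lemma closure_ct (hm : 3 ≤ m) :
    Subgroup.closure {cyc m hm, tr m hm} = ⊤ := by
  have h2 : 2 ≤ m := by omega
  have hc := isCycle_finRotate_of_le h2
  have hs := support_finRotate_of_le (n := m) h2
  have h01 : finRotate m (⟨0, by omega⟩ : Fin m) = ⟨1, by omega⟩ := by
    apply Fin.ext
    rw [finRotate_val hm]
    simp; omega
  have htop := Equiv.Perm.closure_cycle_adjacent_swap hc hs (⟨0, by omega⟩ : Fin m)
  rw [h01] at htop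
  rw [eq_top_iff, ← htop]
  apply Subgroup.closure_le _ |>.mpr
  rw [Set.insert_subset_iff]
  constructor
  · have h1 : (tr m hm) * cyc m hm ∈ Subgroup.closure {cyc m hm, tr m hm} :=
      Subgroup.mul_mem _ (Subgroup.subset_closure (Set.mem_insert_of_mem _ rfl))
        (Subgroup.subset_closure (Set.mem_insert _ _))
    have h2' : (tr m hm) * cyc m hm = finRotate m := by
      rw [cyc, ← mul_assoc, tr, Equiv.swap_mul_self, one_mul]
    rwa [h2'] at h1
  · rw [Set.singleton_subset_iff]
    exact Subgroup.subset_closure (Set.mem_insert_of_mem _ rfl)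

/-- the subgroup generated by the two letter actions -/
def G (m n : ℕ) (hm : 3 ≤ m) (hn : 3 ≤ n) : Subgroup (Perm (Fin m) × Perm (Fin n)) :=
  Subgroup.closure {(cyc m hm, tr n hn), (tr m hm, cyc n hn)}

lemma fst_surj (hm : 3 ≤ m) (hn : 3 ≤ n) (α : Perm (Fin m)) :
    ∃ β, (α, β) ∈ G m n hm hn := by
  have hmap : Subgroup.map (MonoidHom.fst _ _) (G m n hm hn) = ⊤ := by
    rw [G, MonoidHom.map_closure]
    rw [Set.image_insert_eq, Set.image_singleton]
    exact closure_ct hm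
  have : α ∈ Subgroup.map (MonoidHom.fst _ _) (G m n hm hn) := by
    rw [hmap]; trivial
  obtain ⟨g, hg, hfst⟩ := Subgroup.mem_map.mp this
  exact ⟨g.2, by rwa [show (α, g.2) = g from Prod.ext hfst.symm rfl]⟩

lemma conj_fst (hm : 3 ≤ m) (hn : 3 ≤ n) {σ : Perm (Fin m)}
    (h : (σ, 1) ∈ G m n hm hn) (α : Perm (Fin m)) :
    (α * σ * α⁻¹, 1) ∈ G m n hm hn := by
  obtain ⟨β, hβ⟩ := fst_surj hm hn α
  have := Subgroup.mul_mem _ (Subgroup.mul_mem _ hβ h) (Subgroup.inv_mem _ hβ)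
  convert this using 1
  ext <;> simp

lemma flipG (hm : 3 ≤ m) (hn : 3 ≤ n) {σ : Perm (Fin m)} {τ : Perm (Fin n)}
    (h : (σ, τ) ∈ G m n hm hn) : (τ, σ) ∈ G n m hn hm := by
  have hmap : Subgroup.map (MulEquiv.prodComm :
      Perm (Fin m) × Perm (Fin n) ≃* Perm (Fin n) × Perm (Fin m)).toMonoidHom
      (G m n hm hn) = G n m hn hm := by
    rw [G, MonoidHom.map_closure, Set.image_insert_eq, Set.image_singleton]
    rw [G]
    congr 1
    rw [Set.pair_comm]
    rfl
  rw [← hmap]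
  exact Subgroup.mem_map_of_mem _ h

/-- all even permutations paired with 1 are in G, given a three-cycle is -/
lemma alt_fst_of_three (hm : 3 ≤ m) (hn : 3 ≤ n)
    (hex : ∃ γ : Perm (Fin m), γ.IsThreeCycle ∧ (γ, 1) ∈ G m n hm hn) :
    ∀ σ : Perm (Fin m), σ.sign = 1 → (σ, 1) ∈ G m n hm hn := by
  obtain ⟨γ, hγ3, hγ⟩ := hex
  set H : Subgroup (Perm (Fin m)) :=
    Subgroup.comap (MonoidHom.inl (Perm (Fin m)) (Perm (Fin n))) (G m n hm hn) with hH
  have hHmem : ∀ σ : Perm (Fin m), σ ∈ H ↔ (σ, 1) ∈ G m n hm hn := by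
    intro σ; rw [hH, Subgroup.mem_comap]; rfl
  intro σ hσ
  rw [← hHmem]
  have halt : alternatingGroup (Fin m) ≤ H := by
    rw [← Equiv.Perm.closure_three_cycles_eq_alternating]
    apply Subgroup.closure_le _ |>.mpr
    intro δ hδ
    have hconj : IsConj γ δ := Equiv.Perm.isConj_of_cycleType_eq (hγ3.trans hδ.symm)
    obtain ⟨α, hα⟩ := isConj_iff.mp hconj
    have h2 : (α * γ * α⁻¹, 1) ∈ G m n hm hn := conj_fst hm hn hγ α
    rw [hα] at h2
    exact (hHmem δ).mpr h2
  exact halt (Equiv.Perm.mem_alternatingGroup.mpr hσ)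

lemma three_mem (hm : 3 ≤ m) (hn : 3 ≤ n) (hm4 : 4 ≤ m) :
    ∃ γ : Perm (Fin m), γ.IsThreeCycle ∧ (γ, 1) ∈ G m n hm hn := by
  set f0 : Fin m := ⟨0, by omega⟩
  set f1 : Fin m := ⟨1, by omega⟩
  set f3 : Fin m := ⟨3, by omega⟩
  set c := cyc m hm with hc
  set d := c * c with hd
  -- (d, 1) ∈ G
  have hy : ((c, tr n hn) : Perm (Fin m) × Perm (Fin n)) ∈ G m n hm hn :=
    Subgroup.subset_closure (Set.mem_insert _ _)
  have hg2 : ((tr m hm, cyc n hn) : Perm (Fin m) × Perm (Fin n)) ∈ G m n hm hn :=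
    Subgroup.subset_closure (Set.mem_insert_of_mem _ rfl)
  have hdmem : ((d, 1) : Perm (Fin m) × Perm (Fin n)) ∈ G m n hm hn := by
    have := Subgroup.mul_mem _ hy hy
    have heq : ((c, tr n hn) : Perm (Fin m) × Perm (Fin n)) * (c, tr n hn) = (d, 1) := by
      ext <;> simp [hd, tr, Equiv.swap_mul_self]
    rwa [heq] at this
  -- the element h := (d,1) * (g2 * (d,1)⁻¹ * g2⁻¹)
  have hmem : ((d, 1) : Perm (Fin m) × Perm (Fin n)) *
      ((tr m hm, cyc n hn) * (d, 1)⁻¹ * (tr m hm, cyc n hn)⁻¹) ∈ G m n hm hn :=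
    Subgroup.mul_mem _ hdmem
      (Subgroup.mul_mem _ (Subgroup.mul_mem _ hg2 (Subgroup.inv_mem _ hdmem))
        (Subgroup.inv_mem _ hg2))
  -- compute the element
  have hc0 : c f0 = f0 := by
    apply Fin.ext
    rw [cyc_apply_val hm]
    simp [f0]
  have hd0 : d f0 = f0 := by
    rw [hd, Equiv.Perm.mul_apply, hc0, hc0]
  have hc1 : c f1 = ⟨2, by omega⟩ := by
    apply Fin.ext
    rw [cyc_apply_val hm]
    simp [f1]
    omega
  have hc2 : c ⟨2, by omega⟩ = f3 := by
    apply Fin.ext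
    rw [cyc_apply_val hm]
    simp [f3]
    omega
  have hd1 : d f1 = f3 := by
    rw [hd, Equiv.Perm.mul_apply, hc1, hc2]
  have hkey : (d : Perm (Fin m)) * (tr m hm * d⁻¹ * (tr m hm)⁻¹) =
      Equiv.swap f0 f3 * Equiv.swap f0 f1 := by
    have hconj : Equiv.swap (d f0) (d f1) = d * Equiv.swap f0 f1 * d⁻¹ :=
      Equiv.swap_apply_apply d f0 f1
    rw [hd0, hd1] at hconj
    rw [hconj]
    rw [tr]
    rw [Equiv.swap_inv]
    group
    rfl
  refine ⟨Equiv.swap f0 f3 * Equiv.swap f0 f1, ?_, ?_⟩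
  · apply Equiv.Perm.isThreeCycle_swap_mul_swap_same
    · simp [f0, f3, Fin.ext_iff]
    · simp [f0, f1, Fin.ext_iff]
    · simp [f1, f3, Fin.ext_iff]
  · have heq : ((d, 1) : Perm (Fin m) × Perm (Fin n)) *
        ((tr m hm, cyc n hn) * (d, 1)⁻¹ * (tr m hm, cyc n hn)⁻¹) =
        (Equiv.swap f0 f3 * Equiv.swap f0 f1, 1) := by
      have h2 : (1 : Perm (Fin n)) * (cyc n hn * 1⁻¹ * (cyc n hn)⁻¹) = 1 := by group
      rw [Prod.inv_mk, Prod.inv_mk, Prod.mk_mul_mk, Prod.mk_mul_mk, Prod.mk_mul_mk, hkey, h2]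
    rwa [heq] at hmem

private lemma hpt3 : ∀ q : Fin 3,
    (cyc 3 (Nat.le_refl 3) * tr 3 (Nat.le_refl 3) *
      (cyc 3 (Nat.le_refl 3) * tr 3 (Nat.le_refl 3))) q =
    (Equiv.swap (⟨0, Nat.lt_of_sub_eq_succ rfl⟩ : Fin 3) ⟨2, Nat.lt_of_sub_eq_succ rfl⟩ *
      Equiv.swap (⟨0, Nat.lt_of_sub_eq_succ rfl⟩ : Fin 3) ⟨1, Nat.lt_of_sub_eq_succ rfl⟩) q := by
  decide

lemma three_mem3 (hm : 3 ≤ m) (hn : 3 ≤ n) (hm3 : m = 3) (hn4 : 4 ≤ n) :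
    ∃ γ : Perm (Fin m), γ.IsThreeCycle ∧ (γ, 1) ∈ G m n hm hn := by
  subst hm3
  have hgA : ((cyc 3 hm, tr n hn) : Perm (Fin 3) × Perm (Fin n)) ∈ G 3 n hm hn :=
    Subgroup.subset_closure (Set.mem_insert _ _)
  have hgB : ((tr 3 hm, cyc n hn) : Perm (Fin 3) × Perm (Fin n)) ∈ G 3 n hm hn :=
    Subgroup.subset_closure (Set.mem_insert_of_mem _ rfl)
  set γ : Perm (Fin 3) := (cyc 3 hm * tr 3 hm) * (cyc 3 hm * tr 3 hm) with hγ
  set ρ : Perm (Fin n) := (tr n hn * cyc n hn) * (tr n hn * cyc n hn) with hρ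
  have hsq : ((γ, ρ) : Perm (Fin 3) × Perm (Fin n)) ∈ G 3 n hm hn := by
    have h1 := Subgroup.mul_mem _ (Subgroup.mul_mem _ hgA hgB) (Subgroup.mul_mem _ hgA hgB)
    convert h1 using 1
    rfl
  have hρsign : ρ.sign = 1 := by
    rw [hρ, map_mul]
    exact Int.units_mul_self _
  have hsnd : ((1, ρ⁻¹) : Perm (Fin 3) × Perm (Fin n)) ∈ G 3 n hm hn := by
    have hτ : (ρ⁻¹).sign = 1 := by rw [map_inv, hρsign]; rfl
    have h3 : ∃ δ : Perm (Fin n), δ.IsThreeCycle ∧ (δ, 1) ∈ G n 3 hn hm :=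
      three_mem hn hm hn4
    exact flipG hn hm (alt_fst_of_three hn hm h3 ρ⁻¹ hτ)
  have hmem := Subgroup.mul_mem _ hsq hsnd
  have heq : ((γ, ρ) : Perm (Fin 3) × Perm (Fin n)) * (1, ρ⁻¹) = (γ, 1) := by
    rw [Prod.mk_mul_mk, mul_one, mul_inv_cancel]
  rw [heq] at hmem
  refine ⟨γ, ?_, hmem⟩
  have hγeq : γ = Equiv.swap (⟨0, by omega⟩ : Fin 3) ⟨2, by omega⟩ *
      Equiv.swap (⟨0, by omega⟩ : Fin 3) ⟨1, by omega⟩ := by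
    rw [hγ]
    ext q
    exact congrArg Fin.val (hpt3 q)
  rw [hγeq]
  apply Equiv.Perm.isThreeCycle_swap_mul_swap_same <;>
    simp [Fin.ext_iff]

lemma fst_even_all (hm : 3 ≤ m) (hn : 3 ≤ n) (hmn : ¬(m = 3 ∧ n = 3)) :
    ∀ σ : Perm (Fin m), σ.sign = 1 → (σ, 1) ∈ G m n hm hn := by
  rcases Nat.lt_or_ge m 4 with hlt | hge
  · have hm3 : m = 3 := by omega
    have hn4 : 4 ≤ n := by
      rcases Nat.lt_or_ge n 4 with h | h
      · exact absurd ⟨hm3, by omega⟩ hmn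
      · exact h
    exact alt_fst_of_three hm hn (three_mem3 hm hn hm3 hn4)
  · exact alt_fst_of_three hm hn (three_mem hm hn hge)

lemma even_pair_mem (hm : 3 ≤ m) (hn : 3 ≤ n) (hmn : ¬(m = 3 ∧ n = 3))
    {σ : Perm (Fin m)} {τ : Perm (Fin n)} (hσ : σ.sign = 1) (hτ : τ.sign = 1) :
    (σ, τ) ∈ G m n hm hn := by
  have h1 : (σ, (1 : Perm (Fin n))) ∈ G m n hm hn := fst_even_all hm hn hmn σ hσ
  have h2 : ((1 : Perm (Fin m)), τ) ∈ G m n hm hn := by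
    have hmn' : ¬(n = 3 ∧ m = 3) := fun h => hmn ⟨h.2, h.1⟩
    exact flipG hn hm (fst_even_all hn hm hmn' τ hτ)
  have := Subgroup.mul_mem _ h1 h2
  rwa [Prod.mk_mul_mk, mul_one, one_mul] at this

lemma exists_ne_ne (hm : 3 ≤ m) (a b : Fin m) : ∃ u : Fin m, u ≠ a ∧ u ≠ b := by
  by_contra hc
  push_neg at hc
  have hall : ∀ u : Fin m, u = a ∨ u = b := fun u => or_iff_not_imp_left.mpr (hc u)
  have e0 := hall ⟨0, by omega⟩
  have e1 := hall ⟨1, by omega⟩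
  have e2 := hall ⟨2, by omega⟩
  rcases e0 with h0 | h0 <;> rcases e1 with h1 | h1 <;> rcases e2 with h2 | h2 <;>
    simp only [Fin.ext_iff] at h0 h1 h2 <;> omega

lemma exists_even_map (hm : 3 ≤ m) (p v : Fin m) :
    ∃ σ : Perm (Fin m), σ.sign = 1 ∧ σ p = v := by
  rcases eq_or_ne p v with rfl | hpv
  · exact ⟨1, by simp, rfl⟩
  · obtain ⟨u, hup, huv⟩ := exists_ne_ne hm p v
    refine ⟨Equiv.swap p u * Equiv.swap p v, ?_, ?_⟩
    · rw [map_mul, Equiv.Perm.sign_swap (Ne.symm hup), Equiv.Perm.sign_swap hpv]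
      exact Int.units_mul_self _
    · rw [Equiv.Perm.mul_apply, Equiv.swap_apply_left,
        Equiv.swap_apply_of_ne_of_ne (Ne.symm hpv) (Ne.symm huv)]

lemma exists_even_map_ne (hm : 3 ≤ m) (z p p' : Fin m) :
    ∃ σ : Perm (Fin m), σ.sign = 1 ∧ σ p ≠ z ∧ σ p' ≠ z := by
  obtain ⟨u, hup, hup'⟩ := exists_ne_ne hm p p'
  obtain ⟨ρ, hρ, hρz⟩ := exists_even_map hm z u
  refine ⟨ρ⁻¹, by rw [map_inv, hρ]; rfl, ?_, ?_⟩
  · intro h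
    apply hup
    have h2 := congrArg ρ h
    rw [Equiv.Perm.coe_inv, Equiv.apply_symm_apply, hρz] at h2
    exact h2.symm
  · intro h
    apply hup'
    have h2 := congrArg ρ h
    rw [Equiv.Perm.coe_inv, Equiv.apply_symm_apply, hρz] at h2
    exact h2.symm

/-- letter actions -/
def gen (m n : ℕ) (hm : 3 ≤ m) (hn : 3 ≤ n) : Fin 2 → Perm (Fin m) × Perm (Fin n) :=
  fun i => if i = 0 then (cyc m hm, tr n hn) else (tr m hm, cyc n hn)

/-- the permutation pair realized by a word -/
def piW (m n : ℕ) (hm : 3 ≤ m) (hn : 3 ≤ n) (w : List (Fin 2)) :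
    Perm (Fin m) × Perm (Fin n) :=
  (w.reverse.map (gen m n hm hn)).prod

lemma piW_nil (hm : 3 ≤ m) (hn : 3 ≤ n) : piW m n hm hn [] = 1 := rfl

lemma piW_cons (hm : 3 ≤ m) (hn : 3 ≤ n) (i : Fin 2) (w : List (Fin 2)) :
    piW m n hm hn (i :: w) = piW m n hm hn w * gen m n hm hn i := by
  simp [piW]

lemma piW_append (hm : 3 ≤ m) (hn : 3 ≤ n) (w₁ w₂ : List (Fin 2)) :
    piW m n hm hn (w₁ ++ w₂) = piW m n hm hn w₂ * piW m n hm hn w₁ := by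
  simp [piW]

lemma exists_word (hm : 3 ≤ m) (hn : 3 ≤ n) {x : Perm (Fin m) × Perm (Fin n)}
    (hx : x ∈ G m n hm hn) : ∃ w : List (Fin 2), piW m n hm hn w = x := by
  induction hx using Subgroup.closure_induction with
  | mem y hy =>
    rcases hy with h | h
    · refine ⟨[0], ?_⟩
      rw [h, piW_cons, piW_nil, one_mul]
      simp [gen]
    · rw [Set.mem_singleton_iff] at h
      refine ⟨[1], ?_⟩
      rw [h, piW_cons, piW_nil, one_mul]
      simp [gen]
  | one => exact ⟨[], rfl⟩
  | mul x y hxm hym ihx ihy =>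
    obtain ⟨wx, hwx⟩ := ihx
    obtain ⟨wy, hwy⟩ := ihy
    exact ⟨wy ++ wx, by rw [piW_append, hwx, hwy]⟩
  | inv x hxm ihx =>
    obtain ⟨wx, hwx⟩ := ihx
    have hpow : ∀ k : ℕ, ∃ w, piW m n hm hn w = x ^ k := by
      intro k
      induction k with
      | zero => exact ⟨[], by rw [piW_nil, pow_zero]⟩
      | succ k ih =>
        obtain ⟨wk, hwk⟩ := ih
        exact ⟨wx ++ wk, by rw [piW_append, hwk, hwx, pow_succ]⟩
    obtain ⟨w, hw⟩ := hpow (orderOf x - 1)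
    refine ⟨w, ?_⟩
    rw [hw]
    have ho : 0 < orderOf x := orderOf_pos x
    have hone : x ^ (orderOf x - 1) * x = 1 := by
      rw [← pow_succ, Nat.sub_add_cancel ho, pow_orderOf_eq_one]
    exact eq_inv_of_mul_eq_one_left hone

lemma exists_even_pattern (hm : 3 ≤ m) {p p' : Fin m} (hpp : p ≠ p') (z : Fin m)
    (b b' : Bool) (hbb : ¬(b = true ∧ b' = true)) :
    ∃ σ : Perm (Fin m), σ.sign = 1 ∧ (σ p = z ↔ b = true) ∧ (σ p' = z ↔ b' = true) := by
  cases b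
  · cases b'
    · obtain ⟨σ, hs, h1, h2⟩ := exists_even_map_ne hm z p p'
      exact ⟨σ, hs, by simp [h1], by simp [h2]⟩
    · obtain ⟨σ, hs, h1⟩ := exists_even_map hm p' z
      refine ⟨σ, hs, ?_, by simp [h1]⟩
      have : σ p ≠ z := fun h => hpp (σ.injective (h.trans h1.symm))
      simp [this]
  · cases b'
    · obtain ⟨σ, hs, h1⟩ := exists_even_map hm p z
      refine ⟨σ, hs, by simp [h1], ?_⟩
      have : σ p' ≠ z := fun h => hpp (σ.injective (h1.trans h.symm))
      simp [this]
    · exact absurd ⟨rfl, rfl⟩ hbb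

lemma exists_even_point (hm : 3 ≤ m) (p z : Fin m) (b : Bool) :
    ∃ σ : Perm (Fin m), σ.sign = 1 ∧ (σ p = z ↔ b = true) := by
  cases b
  · obtain ⟨u, hu, -⟩ := exists_ne_ne hm z z
    obtain ⟨σ, hs, h1⟩ := exists_even_map hm p u
    refine ⟨σ, hs, ?_⟩
    simp [h1, hu]
  · obtain ⟨σ, hs, h1⟩ := exists_even_map hm p z
    exact ⟨σ, hs, by simp [h1]⟩

end BoolOpSC

open BoolOpSC
set_option maxHeartbeats 1000000


/-- The state complexity of a language: the least number of states of a DFA accepting it. -/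
noncomputable def stateComplexity {α : Type*} (L : Language α) : ℕ :=
  sInf {k : ℕ | ∃ M : DFA α (Fin k), M.accepts = L}

/-- For `m, n ≥ 3` with `(m,n) ≠ (3,3)`: let `L_m` be the language of the DFA over
`{a,b}` (encoded as `Fin 2`: `a = 0` the cycle `(1,…,m−1)` fixing `0`, `b = 1` the
transposition `(0,1)`; initial `0`; final `m−1`), and let `K_n` be the language of the
DFA with the roles of `a` and `b` swapped (`b` the cycle `(1,…,n−1)`, `a` the
transposition `(0,1)`). Then for every proper binary boolean operation `∘`
(given pointwise by `f : Bool → Bool → Bool` depending on both arguments),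
`κ(L_m ∘ K_n) = m·n`. -/
theorem boolean_operation_complexity (m n : ℕ) (hm : 3 ≤ m) (hn : 3 ≤ n)
    (hmn : ¬(m = 3 ∧ n = 3))
    (M : DFA (Fin 2) (Fin m)) (N : DFA (Fin 2) (Fin n))
    (hMstart : M.start = ⟨0, by omega⟩)
    (hMaccept : M.accept = {⟨m - 1, by omega⟩})
    (hMa : ∀ q : Fin m,
      (M.step q 0).val = if q.val = 0 then 0 else if q.val = m - 1 then 1 else q.val + 1)
    (hMb : ∀ q : Fin m,
      (M.step q 1).val = if q.val = 0 then 1 else if q.val = 1 then 0 else q.val)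
    (hNstart : N.start = ⟨0, by omega⟩)
    (hNaccept : N.accept = {⟨n - 1, by omega⟩})
    (hNb : ∀ q : Fin n,
      (N.step q 1).val = if q.val = 0 then 0 else if q.val = n - 1 then 1 else q.val + 1)
    (hNa : ∀ q : Fin n,
      (N.step q 0).val = if q.val = 0 then 1 else if q.val = 1 then 0 else q.val)
    (f : Bool → Bool → Bool)
    (hf1 : ∃ y, f true y ≠ f false y)
    (hf2 : ∃ x, f x true ≠ f x false) :
    stateComplexity
        ({w : List (Fin 2) |
          f (@decide (w ∈ M.accepts) (Classical.propDecidable _))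
            (@decide (w ∈ N.accepts) (Classical.propDecidable _)) = true} :
          Language (Fin 2)) = m * n := by
  classical
  set fm1 : Fin m := ⟨m - 1, by omega⟩ with hfm1
  set fn1 : Fin n := ⟨n - 1, by omega⟩ with hfn1
  set L : Language (Fin 2) :=
    ({w : List (Fin 2) |
      f (@decide (w ∈ M.accepts) (Classical.propDecidable _))
        (@decide (w ∈ N.accepts) (Classical.propDecidable _)) = true} : Language (Fin 2))
    with hL
  -- step lemmas
  have hstepM : ∀ (q : Fin m) (i : Fin 2), M.step q i = (gen m n hm hn i).1 q := by
    intro q i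
    fin_cases i
    · apply Fin.ext
      show (M.step q 0).val = ((cyc m hm) q).val
      rw [hMa q, cyc_apply_val hm]
    · apply Fin.ext
      show (M.step q 1).val = ((tr m hm) q).val
      rw [hMb q, tr_apply_val hm]
  have hstepN : ∀ (q : Fin n) (i : Fin 2), N.step q i = (gen m n hm hn i).2 q := by
    intro q i
    fin_cases i
    · apply Fin.ext
      show (N.step q 0).val = ((tr n hn) q).val
      rw [hNa q, tr_apply_val hn]
    · apply Fin.ext
      show (N.step q 1).val = ((cyc n hn) q).val
      rw [hNb q, cyc_apply_val hn]
  -- evaluation via permutations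
  have hev : ∀ (w : List (Fin 2)) (p : Fin m) (q : Fin n),
      M.evalFrom p w = (piW m n hm hn w).1 p ∧
      N.evalFrom q w = (piW m n hm hn w).2 q := by
    intro w
    induction w with
    | nil => exact fun p q => ⟨rfl, rfl⟩
    | cons i w ih =>
      intro p q
      constructor
      · show M.evalFrom (M.step p i) w = _
        rw [(ih (M.step p i) q).1, piW_cons, hstepM p i]
        rfl
      · show N.evalFrom (N.step q i) w = _
        rw [(ih p (N.step q i)).2, piW_cons, hstepN q i]
        rfl
  -- realize even pairs by words
  have build : ∀ (σ : Equiv.Perm (Fin m)) (τ : Equiv.Perm (Fin n)),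
      σ.sign = 1 → τ.sign = 1 →
      ∃ z : List (Fin 2), (∀ a : Fin m, M.evalFrom a z = σ a) ∧
        (∀ b : Fin n, N.evalFrom b z = τ b) := by
    intro σ τ hσ hτ
    obtain ⟨z, hz⟩ := exists_word hm hn (even_pair_mem hm hn hmn hσ hτ)
    refine ⟨z, fun a => ?_, fun b => ?_⟩
    · rw [(hev z a ⟨0, by omega⟩).1, hz]
    · rw [(hev z ⟨0, by omega⟩ b).2, hz]
  -- reachability
  have reach : ∀ (p : Fin m) (q : Fin n), ∃ w : List (Fin 2),
      M.eval w = p ∧ N.eval w = q := by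
    intro p q
    obtain ⟨σ, hσs, hσp⟩ := exists_even_map hm ⟨0, by omega⟩ p
    obtain ⟨τ, hτs, hτq⟩ := exists_even_map hn ⟨0, by omega⟩ q
    obtain ⟨z, hz1, hz2⟩ := build σ τ hσs hτs
    refine ⟨z, ?_, ?_⟩
    · show M.evalFrom M.start z = p
      rw [hMstart, hz1, hσp]
    · show N.evalFrom N.start z = q
      rw [hNstart, hz2, hτq]
  -- distinguishability
  have dist : ∀ (p : Fin m) (q : Fin n) (p' : Fin m) (q' : Fin n),
      (p, q) ≠ (p', q') →
      ∃ z : List (Fin 2),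
        f (decide (M.evalFrom p z = fm1)) (decide (N.evalFrom q z = fn1)) ≠
        f (decide (M.evalFrom p' z = fm1)) (decide (N.evalFrom q' z = fn1)) := by
    intro p q p' q' hne
    -- helper turning iff into decide
    have dec : ∀ (P : Prop) (inst : Decidable P) (b : Bool), (P ↔ b = true) →
        @decide P inst = b := by
      intro P inst b hiff
      cases b
      · exact decide_eq_false (fun hp => by simpa using hiff.mp hp)
      · exact decide_eq_true (hiff.mpr rfl)
    have main : ∀ (σ : Equiv.Perm (Fin m)) (τ : Equiv.Perm (Fin n))
        (b1 b2 b1' b2' : Bool), σ.sign = 1 → τ.sign = 1 →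
        (σ p = fm1 ↔ b1 = true) → (τ q = fn1 ↔ b2 = true) →
        (σ p' = fm1 ↔ b1' = true) → (τ q' = fn1 ↔ b2' = true) →
        f b1 b2 ≠ f b1' b2' →
        ∃ z : List (Fin 2),
          f (decide (M.evalFrom p z = fm1)) (decide (N.evalFrom q z = fn1)) ≠
          f (decide (M.evalFrom p' z = fm1)) (decide (N.evalFrom q' z = fn1)) := by
      intro σ τ b1 b2 b1' b2' hσs hτs h1 h2 h1' h2' hf
      obtain ⟨z, hz1, hz2⟩ := build σ τ hσs hτs
      refine ⟨z, ?_⟩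
      rw [hz1 p, hz1 p', hz2 q, hz2 q',
        dec _ _ _ h1, dec _ _ _ h2, dec _ _ _ h1', dec _ _ _ h2']
      exact hf
    by_cases hp : p = p'
    · have hq : q ≠ q' := by
        intro h
        exact hne (by rw [hp, h])
      obtain ⟨x, hx⟩ := hf2
      obtain ⟨σ, hσs, hσ1⟩ := exists_even_point hm p fm1 x
      obtain ⟨τ, hτs, hτ1, hτ2⟩ := exists_even_pattern hn hq fn1 true false (by simp)
      subst hp
      exact main σ τ x true x false hσs hτs hσ1 hτ1 hσ1 hτ2 hx
    · by_cases hq : q = q'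
      · obtain ⟨y, hy⟩ := hf1
        obtain ⟨σ, hσs, hσ1, hσ2⟩ := exists_even_pattern hm hp fm1 true false (by simp)
        obtain ⟨τ, hτs, hτ1⟩ := exists_even_point hn q fn1 y
        subst hq
        exact main σ τ true y false y hσs hτs hσ1 hτ1 hσ2 hτ1 hy
      · by_cases h1 : f true false = f false false
        · by_cases h2 : f false true = f false false
          · -- f T T ≠ f F F
            obtain ⟨y, hy⟩ := hf1
            have hyT : y = true := by
              cases y
              · exact absurd h1 hy
              · rfl
            subst hyT
            obtain ⟨σ, hσs, hσ1, hσ2⟩ := exists_even_pattern hm hp fm1 true false (by simp)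
            obtain ⟨τ, hτs, hτ1, hτ2⟩ := exists_even_pattern hn hq fn1 true false (by simp)
            refine main σ τ true true false false hσs hτs hσ1 hτ1 hσ2 hτ2 ?_
            rw [← h2]
            exact hy
          · -- f F T ≠ f F F
            obtain ⟨σ, hσs, hσ1, hσ2⟩ := exists_even_pattern hm hp fm1 false false (by simp)
            obtain ⟨τ, hτs, hτ1, hτ2⟩ := exists_even_pattern hn hq fn1 true false (by simp)
            exact main σ τ false true false false hσs hτs hσ1 hτ1 hσ2 hτ2 h2
        · -- f T F ≠ f F F
          obtain ⟨σ, hσs, hσ1, hσ2⟩ := exists_even_pattern hm hp fm1 true false (by simp)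
          obtain ⟨τ, hτs, hτ1, hτ2⟩ := exists_even_pattern hn hq fn1 false false (by simp)
          exact main σ τ true false false false hσs hτs hσ1 hτ1 hσ2 hτ2 h1
  -- membership characterisation
  have hmemL : ∀ (u : List (Fin 2)) (p : Fin m) (q : Fin n),
      M.eval u = p → N.eval u = q →
      ((u ∈ L) ↔ f (decide (p = fm1)) (decide (q = fn1)) = true) := by
    intro u p q hMu hNu
    have e1 : (@decide (u ∈ M.accepts) (Classical.propDecidable _)) = decide (p = fm1) := by
      rw [decide_eq_decide]
      rw [DFA.mem_accepts, hMaccept, hMu]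
      exact Set.mem_singleton_iff
    have e2 : (@decide (u ∈ N.accepts) (Classical.propDecidable _)) = decide (q = fn1) := by
      rw [decide_eq_decide]
      rw [DFA.mem_accepts, hNaccept, hNu]
      exact Set.mem_singleton_iff
    show f _ _ = true ↔ _
    rw [e1, e2]
  -- upper bound : product automaton
  set P : DFA (Fin 2) (Fin m × Fin n) :=
    { step := fun s i => (M.step s.1 i, N.step s.2 i)
      start := (M.start, N.start)
      accept := {s | f (decide (s.1 = fm1)) (decide (s.2 = fn1)) = true} } with hP
  have hPev : ∀ (w : List (Fin 2)) (s : Fin m × Fin n),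
      P.evalFrom s w = (M.evalFrom s.1 w, N.evalFrom s.2 w) := by
    intro w
    induction w with
    | nil => exact fun s => rfl
    | cons i w ih =>
      intro s
      show P.evalFrom (P.step s i) w = _
      rw [ih (P.step s i)]
      rfl
  set e : Fin m × Fin n ≃ Fin (m * n) := finProdFinEquiv with he
  set Q : DFA (Fin 2) (Fin (m * n)) :=
    { step := fun s i => e (P.step (e.symm s) i)
      start := e P.start
      accept := {s | e.symm s ∈ P.accept} } with hQ
  have hQev : ∀ (w : List (Fin 2)) (s : Fin m × Fin n),
      Q.evalFrom (e s) w = e (P.evalFrom s w) := by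
    intro w
    induction w with
    | nil => exact fun s => rfl
    | cons i w ih =>
      intro s
      show Q.evalFrom (Q.step (e s) i) w = _
      have hstep : Q.step (e s) i = e (P.step s i) := by
        show e (P.step (e.symm (e s)) i) = _
        rw [e.symm_apply_apply]
      rw [hstep, ih (P.step s i)]
      rfl
  have hQacc : Q.accepts = L := by
    ext u
    rw [DFA.mem_accepts]
    have hQe : Q.eval u = e (P.evalFrom (M.start, N.start) u) := hQev u (M.start, N.start)
    have : (Q.eval u ∈ Q.accept) ↔ (P.evalFrom (M.start, N.start) u ∈ P.accept) := by
      rw [hQe]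
      show (e.symm (e _) ∈ P.accept) ↔ _
      rw [e.symm_apply_apply]
    rw [this, hPev u (M.start, N.start)]
    have h2 := hmemL u (M.evalFrom M.start u) (N.evalFrom N.start u) rfl rfl
    rw [h2]
    exact Iff.rfl
  -- lower bound
  have lower : ∀ k : ℕ, (∃ A : DFA (Fin 2) (Fin k), A.accepts = L) → m * n ≤ k := by
    rintro k ⟨A, hA⟩
    have hreach := fun s : Fin m × Fin n => reach s.1 s.2
    choose wf hw1 hw2 using hreach
    have hinj : Function.Injective (fun s : Fin m × Fin n => A.eval (wf s)) := by
      intro s s' hss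
      by_contra hne
      obtain ⟨z, hz⟩ := dist s.1 s.2 s'.1 s'.2 (by
        intro h
        exact hne (by
          have := Prod.mk.injEq s.1 s.2 s'.1 s'.2 ▸ h
          exact Prod.ext (congrArg Prod.fst h) (congrArg Prod.snd h)))
      have hmem : ∀ t : Fin m × Fin n,
          ((wf t ++ z) ∈ L) ↔
          f (decide (M.evalFrom t.1 z = fm1)) (decide (N.evalFrom t.2 z = fn1)) = true := by
        intro t
        apply hmemL
        · show M.evalFrom M.start (wf t ++ z) = _
          rw [DFA.evalFrom_of_append]
          show M.evalFrom (M.eval (wf t)) z = _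
          rw [hw1 t]
        · show N.evalFrom N.start (wf t ++ z) = _
          rw [DFA.evalFrom_of_append]
          show N.evalFrom (N.eval (wf t)) z = _
          rw [hw2 t]
      have hsame : ((wf s ++ z) ∈ L) ↔ ((wf s' ++ z) ∈ L) := by
        rw [← hA, DFA.mem_accepts, DFA.mem_accepts]
        have hs : A.eval (wf s ++ z) = A.evalFrom (A.eval (wf s)) z := by
          show A.evalFrom A.start _ = _
          rw [DFA.evalFrom_of_append]
          rfl
        have hs' : A.eval (wf s' ++ z) = A.evalFrom (A.eval (wf s')) z := by
          show A.evalFrom A.start _ = _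
          rw [DFA.evalFrom_of_append]
          rfl
        have hss2 : A.eval (wf s) = A.eval (wf s') := hss
        rw [hs, hs', hss2]
      apply hz
      have h1 := (hmem s).symm.trans ((hsame).trans (hmem s'))
      cases hb : f (decide (M.evalFrom s.1 z = fm1)) (decide (N.evalFrom s.2 z = fn1)) <;>
        cases hb' : f (decide (M.evalFrom s'.1 z = fm1)) (decide (N.evalFrom s'.2 z = fn1)) <;>
        simp_all
    have hcard := Fintype.card_le_of_injective _ hinj
    simpa using hcard
  -- conclude
  show sInf {k : ℕ | ∃ A : DFA (Fin 2) (Fin k), A.accepts = L} = m * n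
  apply le_antisymm
  · exact Nat.sInf_le ⟨Q, hQacc⟩
  · exact le_csInf ⟨m * n, Q, hQacc⟩ fun k hk => lower k hk
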